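/- Let D be the incidence matrix of the complete graph K_n on n ≥ 2 vertices (so m = n(n−1)/2 edges). Then every column s_j of the Moore–Penrose pseudoinverse D† satisfies ‖s_j‖₂² ≤ 2/n², hence ρ(D) ≤ √2/n; moreover the compatibility factor satisfies κ_T(D) ≥ 1/(2√(n−1)) for every T ⊆ [m]. -/

import Mathlib

open MeasureTheory ProbabilityTheory Matrix

noncomputable section

/-- Euclidean norm of a finitely indexed real vector. -/
def norm2 {V : Type*} [Fintype V] (θ : V → ℝ) : ℝ := Real.sqrt (∑ i, θ i ^ 2)

/-- Euclidean norm of the `j`-th column of `S`. -/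
def colNorm {V E : Type*} [Fintype V] (S : Matrix V E ℝ) (j : E) : ℝ :=
  Real.sqrt (∑ i, S i j ^ 2)

/-- `D` is an (oriented) edge–vertex incidence matrix of the simple graph `G`:
each row has a `1` and a `-1` at the endpoints of an edge of `G` and `0` elsewhere,
and each edge of `G` corresponds to exactly one row. -/
def IsIncidence {V E : Type*} (G : SimpleGraph V) (D : Matrix E V ℝ) : Prop :=
  (∀ e : E, ∃ i j : V, G.Adj i j ∧ D e i = 1 ∧ D e j = -1 ∧
      ∀ k : V, k ≠ i → k ≠ j → D e k = 0) ∧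
  (∀ i j : V, G.Adj i j →
      ∃! e : E, (D e i = 1 ∧ D e j = -1) ∨ (D e i = -1 ∧ D e j = 1))

/-- `S` is the Moore–Penrose pseudoinverse of `D`. -/
def IsMoorePenrose {E V : Type*} [Fintype V] [Fintype E]
    (D : Matrix E V ℝ) (S : Matrix V E ℝ) : Prop :=
  D * S * D = D ∧ S * D * S = S ∧ (D * S)ᵀ = D * S ∧ (S * D)ᵀ = S * D

/-- Inverse scaling factor: maximal column norm of the pseudoinverse `S` of `D`. -/
def invScaling {V E : Type*} [Fintype V] (S : Matrix V E ℝ) : ℝ := ⨆ j : E, colNorm S j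

/-- Compatibility factor `κ_T(D)`. -/
def compat {V E : Type*} [Fintype V] [Fintype E] [DecidableEq E]
    (D : Matrix E V ℝ) (T : Finset E) : ℝ :=
  if T = ∅ then 1
  else sInf {r : ℝ | ∃ θ : V → ℝ, (∑ e ∈ T, |D.mulVec θ e|) ≠ 0 ∧
    r = Real.sqrt T.card * norm2 θ / ∑ e ∈ T, |D.mulVec θ e|}

/-- `θhat` is a TV denoiser with data `y` and regularization `lam`,
i.e. a minimizer of the TV-penalized least squares criterion. -/
def IsTVDenoiser {V E : Type*} [Fintype V] [Fintype E]
    (D : Matrix E V ℝ) (lam : ℝ) (y θhat : V → ℝ) : Prop :=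
  ∀ θ : V → ℝ,
    (1 / (Fintype.card V : ℝ)) * ∑ i, (θhat i - y i) ^ 2 + lam * ∑ e, |D.mulVec θhat e|
      ≤ (1 / (Fintype.card V : ℝ)) * ∑ i, (θ i - y i) ^ 2 + lam * ∑ e, |D.mulVec θ e|

/-- The law of the noise vector `ε`: independent centered Gaussian coordinates
with variance `σ²`. -/
def noise (V : Type*) [Fintype V] (σ : ℝ) : Measure (V → ℝ) :=
  Measure.pi fun _ => gaussianReal 0 (σ ^ 2).toNNReal

/-- Number of nonzero coordinates. -/
def supp0 {E : Type*} [Fintype E] (x : E → ℝ) : ℕ :=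
  (Finset.univ.filter fun e => x e ≠ 0).card

/-- The N×N two-dimensional grid graph. -/
def gridGraph2 (N : ℕ) : SimpleGraph (Fin N × Fin N) :=
  SimpleGraph.fromRel fun a b =>
    (a.1 = b.1 ∧ (a.2 : ℕ) + 1 = (b.2 : ℕ)) ∨ (a.2 = b.2 ∧ (a.1 : ℕ) + 1 = (b.1 : ℕ))

/-- The d-dimensional N×⋯×N grid graph. -/
def gridGraphD (d N : ℕ) : SimpleGraph (Fin d → Fin N) :=
  SimpleGraph.fromRel fun a b =>
    ∃ j : Fin d, ((a j : ℕ) + 1 = (b j : ℕ)) ∧ ∀ k : Fin d, k ≠ j → a k = b k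

/-- The d-dimensional hypercube graph. -/
def cubeGraph (d : ℕ) : SimpleGraph (Fin d → Bool) :=
  SimpleGraph.fromRel fun a b =>
    ∃ j : Fin d, a j ≠ b j ∧ ∀ k : Fin d, k ≠ j → a k = b k

/-- The k-th power of the cycle graph on n vertices. -/
def cyclePowerGraph (n k : ℕ) : SimpleGraph (Fin n) :=
  SimpleGraph.fromRel fun a b =>
    ∃ l : ℕ, 1 ≤ l ∧ l ≤ k ∧ (b : ℕ) = ((a : ℕ) + l) % n


section AuxProof

open Finset

lemma mp_unique {E V : Type*} [Fintype V] [Fintype E]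
    (D : Matrix E V ℝ) (S T : Matrix V E ℝ)
    (hS : IsMoorePenrose D S) (hT : IsMoorePenrose D T) : S = T := by
  obtain ⟨hS1, hS2, hS3, hS4⟩ := hS
  obtain ⟨hT1, hT2, hT3, hT4⟩ := hT
  have hDS : D * S = D * T := by
    calc D * S = (D * S)ᵀ := hS3.symm
      _ = Sᵀ * Dᵀ := Matrix.transpose_mul _ _
      _ = Sᵀ * (D * T * D)ᵀ := by rw [hT1]
      _ = Sᵀ * (Dᵀ * (D * T)ᵀ) := by rw [Matrix.transpose_mul (D * T) D]
      _ = (Sᵀ * Dᵀ) * (D * T)ᵀ := by simp only [Matrix.mul_assoc]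
      _ = (D * S)ᵀ * (D * T)ᵀ := by rw [Matrix.transpose_mul D S]
      _ = (D * S) * (D * T) := by rw [hS3, hT3]
      _ = (D * S * D) * T := by rw [Matrix.mul_assoc (D * S) D T]
      _ = D * T := by rw [hS1]
  have hSD : S * D = T * D := by
    calc S * D = (S * D)ᵀ := hS4.symm
      _ = Dᵀ * Sᵀ := Matrix.transpose_mul _ _
      _ = (D * T * D)ᵀ * Sᵀ := by rw [hT1]
      _ = (Dᵀ * (Tᵀ * Dᵀ)) * Sᵀ := by
            rw [Matrix.transpose_mul (D * T) D, Matrix.transpose_mul D T]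
      _ = ((Dᵀ * Tᵀ) * Dᵀ) * Sᵀ := by simp only [Matrix.mul_assoc]
      _ = ((T * D)ᵀ * Dᵀ) * Sᵀ := by rw [Matrix.transpose_mul T D]
      _ = ((T * D) * Dᵀ) * Sᵀ := by rw [hT4]
      _ = (T * D) * (Dᵀ * Sᵀ) := Matrix.mul_assoc _ _ _
      _ = (T * D) * (S * D)ᵀ := by rw [Matrix.transpose_mul S D]
      _ = (T * D) * (S * D) := by rw [hS4]
      _ = T * (D * (S * D)) := Matrix.mul_assoc _ _ _
      _ = T * (D * S * D) := by rw [← Matrix.mul_assoc D S D]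
      _ = T * D := by rw [hS1]
  calc S = S * D * S := hS2.symm
    _ = (T * D) * S := by rw [hSD]
    _ = T * (D * S) := Matrix.mul_assoc _ _ _
    _ = T * (D * T) := by rw [hDS]
    _ = T * D * T := (Matrix.mul_assoc _ _ _).symm
    _ = T := hT2

variable {m n : ℕ} (D : Matrix (Fin m) (Fin n) ℝ)

lemma inc_row (hD : IsIncidence (⊤ : SimpleGraph (Fin n)) D) (e : Fin m) :
    ∃ a b : Fin n, a ≠ b ∧ D e a = 1 ∧ D e b = -1 ∧
      ∀ k, k ≠ a → k ≠ b → D e k = 0 := by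
  obtain ⟨a, b, hab, ha, hb, h0⟩ := hD.1 e
  exact ⟨a, b, hab.ne, ha, hb, h0⟩

lemma sum_two {f : Fin n → ℝ} {a b : Fin n} (hab : a ≠ b)
    (h0 : ∀ k, k ≠ a → k ≠ b → f k = 0) : ∑ k, f k = f a + f b := by
  rw [← Finset.sum_pair hab]
  refine (Finset.sum_subset (Finset.subset_univ _) ?_).symm
  intro x _ hx
  simp only [Finset.mem_insert, Finset.mem_singleton] at hx
  push_neg at hx
  exact h0 x hx.1 hx.2

lemma row_sum (hD : IsIncidence (⊤ : SimpleGraph (Fin n)) D) (e : Fin m) :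
    ∑ k, D e k = 0 := by
  obtain ⟨a, b, hab, ha, hb, h0⟩ := inc_row D hD e
  rw [sum_two hab h0, ha, hb]; ring

lemma row_sq_sum (hD : IsIncidence (⊤ : SimpleGraph (Fin n)) D) (e : Fin m) :
    ∑ k, D e k ^ 2 = 2 := by
  obtain ⟨a, b, hab, ha, hb, h0⟩ := inc_row D hD e
  rw [sum_two (f := fun k => D e k ^ 2) hab (fun k h1 h2 => by simp [h0 k h1 h2]),
    ha, hb]
  norm_num

lemma entry_cases (hD : IsIncidence (⊤ : SimpleGraph (Fin n)) D) (e : Fin m) (k : Fin n) :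
    D e k = 0 ∨ D e k = 1 ∨ D e k = -1 := by
  obtain ⟨a, b, hab, ha, hb, h0⟩ := inc_row D hD e
  by_cases h1 : k = a
  · subst h1; exact Or.inr (Or.inl ha)
  by_cases h2 : k = b
  · subst h2; exact Or.inr (Or.inr hb)
  exact Or.inl (h0 k h1 h2)

lemma support_le (hD : IsIncidence (⊤ : SimpleGraph (Fin n)) D) {e : Fin m}
    {i j k : Fin n} (hij : i ≠ j) (hi : D e i ≠ 0) (hj : D e j ≠ 0)
    (hki : k ≠ i) (hkj : k ≠ j) : D e k = 0 := by
  obtain ⟨a, b, hab, ha, hb, h0⟩ := inc_row D hD e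
  have mem : ∀ x, D e x ≠ 0 → x = a ∨ x = b := by
    intro x hx
    by_contra h
    push_neg at h
    exact hx (h0 x h.1 h.2)
  rcases mem i hi with rfl | rfl <;> rcases mem j hj with rfl | rfl
  · exact absurd rfl hij
  · exact h0 k hki hkj
  · exact h0 k hkj hki
  · exact absurd rfl hij

lemma card_inc (hD : IsIncidence (⊤ : SimpleGraph (Fin n)) D) (i : Fin n) :
    (Finset.univ.filter fun e : Fin m => D e i ≠ 0).card = n - 1 := by
  classical
  have hch : ∀ k : Fin n, k ≠ i → ∃ e : Fin m,
      ((D e i = 1 ∧ D e k = -1) ∨ (D e i = -1 ∧ D e k = 1)) ∧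
      ∀ e', ((D e' i = 1 ∧ D e' k = -1) ∨ (D e' i = -1 ∧ D e' k = 1)) → e' = e := by
    intro k hk
    obtain ⟨e, he, hu⟩ := hD.2 i k ((SimpleGraph.top_adj i k).mpr hk.symm)
    exact ⟨e, he, hu⟩
  choose f hf hfu using hch
  have hbij : (Finset.univ.erase i).card
      = (Finset.univ.filter fun e : Fin m => D e i ≠ 0).card := by
    refine Finset.card_bij (fun k hk => f k (Finset.mem_erase.mp hk).1) ?_ ?_ ?_
    · intro k hk
      have hk' := (Finset.mem_erase.mp hk).1
      simp only [Finset.mem_filter, Finset.mem_univ, true_and]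
      rcases hf k hk' with ⟨h1, _⟩ | ⟨h1, _⟩ <;> rw [h1] <;> norm_num
    · intro k₁ hk₁ k₂ hk₂ heq
      have hk₁' := (Finset.mem_erase.mp hk₁).1
      have hk₂' := (Finset.mem_erase.mp hk₂).1
      by_contra hne
      have heq' : f k₁ (Finset.mem_erase.mp hk₁).1 = f k₂ (Finset.mem_erase.mp hk₂).1 := heq
      have p₁ := hf k₁ (Finset.mem_erase.mp hk₁).1
      have p₂ := hf k₂ (Finset.mem_erase.mp hk₂).1
      rw [← heq'] at p₂
      have hi0 : D (f k₁ (Finset.mem_erase.mp hk₁).1) i ≠ 0 := by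
        rcases p₁ with ⟨h1, _⟩ | ⟨h1, _⟩ <;> rw [h1] <;> norm_num
      have hk₁0 : D (f k₁ (Finset.mem_erase.mp hk₁).1) k₁ ≠ 0 := by
        rcases p₁ with ⟨_, h1⟩ | ⟨_, h1⟩ <;> rw [h1] <;> norm_num
      have hk₂0 : D (f k₁ (Finset.mem_erase.mp hk₁).1) k₂ ≠ 0 := by
        rcases p₂ with ⟨_, h1⟩ | ⟨_, h1⟩ <;> rw [h1] <;> norm_num
      exact hk₂0 (support_le D hD hk₁'.symm hi0 hk₁0 hk₂' (Ne.symm hne))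
    · intro e he
      have he' : D e i ≠ 0 := (Finset.mem_filter.mp he).2
      obtain ⟨a, b, hab, ha, hb, h0⟩ := inc_row D hD e
      have hia : i = a ∨ i = b := by
        by_contra h
        push_neg at h
        exact he' (h0 i h.1 h.2)
      rcases hia with rfl | rfl
      · have hmem : b ∈ Finset.univ.erase i :=
          Finset.mem_erase.mpr ⟨hab.symm, Finset.mem_univ b⟩
        exact ⟨b, hmem, (hfu b (Finset.mem_erase.mp hmem).1 e (Or.inl ⟨ha, hb⟩)).symm⟩
      · have hmem : a ∈ Finset.univ.erase i :=
          Finset.mem_erase.mpr ⟨hab, Finset.mem_univ a⟩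
        exact ⟨a, hmem, (hfu a (Finset.mem_erase.mp hmem).1 e (Or.inr ⟨hb, ha⟩)).symm⟩
  rw [← hbij, Finset.card_erase_of_mem (Finset.mem_univ i), Finset.card_univ,
    Fintype.card_fin]

lemma gram (hD : IsIncidence (⊤ : SimpleGraph (Fin n)) D) (hn : 1 ≤ n) (i k : Fin n) :
    ∑ e, D e i * D e k = (if i = k then (n : ℝ) else 0) - 1 := by
  classical
  by_cases hik : i = k
  · subst hik
    rw [if_pos rfl]
    have h1 : ∀ e, D e i * D e i = if D e i ≠ 0 then (1:ℝ) else 0 := by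
      intro e
      rcases entry_cases D hD e i with h | h | h <;> simp [h]
    rw [Finset.sum_congr rfl fun e _ => h1 e, Finset.sum_boole, card_inc D hD i]
    have : ((n - 1 : ℕ) : ℝ) = (n : ℝ) - 1 := by
      rw [Nat.cast_sub hn]; norm_num
    rw [this]
  · rw [if_neg hik]
    obtain ⟨e₀, he₀, hu⟩ := hD.2 i k ((SimpleGraph.top_adj i k).mpr hik)
    have hz : ∀ e ∈ Finset.univ, e ≠ e₀ → D e i * D e k = 0 := by
      intro e _ hne
      by_contra hprod
      have hi : D e i ≠ 0 := fun h => hprod (by rw [h]; ring)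
      have hk : D e k ≠ 0 := fun h => hprod (by rw [h]; ring)
      obtain ⟨a, b, hab, ha, hb, h0⟩ := inc_row D hD e
      have mem : ∀ x, D e x ≠ 0 → x = a ∨ x = b := by
        intro x hx
        by_contra h
        push_neg at h
        exact hx (h0 x h.1 h.2)
      have hP : (D e i = 1 ∧ D e k = -1) ∨ (D e i = -1 ∧ D e k = 1) := by
        rcases mem i hi with rfl | rfl <;> rcases mem k hk with rfl | rfl
        · exact absurd rfl hik
        · exact Or.inl ⟨ha, hb⟩
        · exact Or.inr ⟨hb, ha⟩
        · exact absurd rfl hik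
      exact hne (hu e hP)
    rw [Finset.sum_eq_single e₀ hz (fun h => absurd (Finset.mem_univ e₀) h)]
    rcases he₀ with ⟨h1, h2⟩ | ⟨h1, h2⟩ <;> rw [h1, h2] <;> ring

lemma DDtD (hD : IsIncidence (⊤ : SimpleGraph (Fin n)) D) (hn : 1 ≤ n) :
    D * Dᵀ * D = (n : ℝ) • D := by
  rw [Matrix.mul_assoc]
  ext e k
  rw [Matrix.mul_apply]
  have hg : ∀ i, (Dᵀ * D) i k = (if i = k then (n : ℝ) else 0) - 1 := by
    intro i
    rw [Matrix.mul_apply]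
    simpa [Matrix.transpose_apply] using gram D hD hn i k
  calc ∑ i, D e i * (Dᵀ * D) i k
      = ∑ i, (D e i * (if i = k then (n : ℝ) else 0) - D e i) := by
        refine Finset.sum_congr rfl fun i _ => ?_
        rw [hg i]; ring
    _ = ∑ i, D e i * (if i = k then (n : ℝ) else 0) - ∑ i, D e i :=
        Finset.sum_sub_distrib _ _
    _ = D e k * n - 0 := by
        rw [row_sum D hD e]
        congr 1
        simp [mul_ite]
    _ = ((n : ℝ) • D) e k := by simp [Matrix.smul_apply]; ring

lemma mp_inv (hD : IsIncidence (⊤ : SimpleGraph (Fin n)) D) (hn : 1 ≤ n) :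
    IsMoorePenrose D ((n : ℝ)⁻¹ • Dᵀ) := by
  have hn0 : (n : ℝ) ≠ 0 := by
    have : (1 : ℝ) ≤ (n : ℝ) := by exact_mod_cast hn
    linarith
  have key := DDtD D hD hn
  have keyT : Dᵀ * D * Dᵀ = (n : ℝ) • Dᵀ := by
    have h := congrArg Matrix.transpose key
    simp only [Matrix.transpose_mul, Matrix.transpose_smul,
      Matrix.transpose_transpose] at h
    rw [← Matrix.mul_assoc] at h
    exact h
  have hsym1 : (D * Dᵀ)ᵀ = D * Dᵀ := by
    rw [Matrix.transpose_mul, Matrix.transpose_transpose]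
  have hsym2 : (Dᵀ * D)ᵀ = Dᵀ * D := by
    rw [Matrix.transpose_mul, Matrix.transpose_transpose]
  refine ⟨?_, ?_, ?_, ?_⟩
  · simp only [Matrix.mul_smul, Matrix.smul_mul, smul_smul, key]
    rw [inv_mul_cancel₀ hn0, one_smul]
  · simp only [Matrix.mul_smul, Matrix.smul_mul, smul_smul, keyT]
    congr 1
    field_simp
  · simp only [Matrix.mul_smul, Matrix.transpose_smul, hsym1]
  · simp only [Matrix.smul_mul, Matrix.transpose_smul, hsym2]

lemma quad (hD : IsIncidence (⊤ : SimpleGraph (Fin n)) D) (hn : 1 ≤ n) (θ : Fin n → ℝ) :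
    ∑ e, (D.mulVec θ e) ^ 2 = n * (∑ i, θ i ^ 2) - (∑ i, θ i) ^ 2 := by
  have key := gram D hD hn
  calc ∑ e, (D.mulVec θ e) ^ 2
      = ∑ e, ∑ i, ∑ k, θ i * θ k * (D e i * D e k) := by
        refine Finset.sum_congr rfl fun e _ => ?_
        simp only [Matrix.mulVec, dotProduct]
        rw [sq, Finset.sum_mul_sum]
        exact Finset.sum_congr rfl fun i _ => Finset.sum_congr rfl fun k _ => by ring
    _ = ∑ i, ∑ k, θ i * θ k * ∑ e, D e i * D e k := by
        rw [Finset.sum_comm]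
        refine Finset.sum_congr rfl fun i _ => ?_
        rw [Finset.sum_comm]
        exact Finset.sum_congr rfl fun k _ => (Finset.mul_sum _ _ _).symm
    _ = ∑ i, ∑ k, (θ i * θ k * (if i = k then (n : ℝ) else 0) - θ i * θ k) := by
        refine Finset.sum_congr rfl fun i _ => Finset.sum_congr rfl fun k _ => ?_
        rw [key i k]; ring
    _ = ∑ i, (θ i * θ i * n - θ i * ∑ k, θ k) := by
        refine Finset.sum_congr rfl fun i _ => ?_
        rw [Finset.sum_sub_distrib]
        congr 1
        · simp [mul_ite]
        · rw [Finset.mul_sum]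
    _ = n * (∑ i, θ i ^ 2) - (∑ i, θ i) ^ 2 := by
        rw [Finset.sum_sub_distrib]
        congr 1
        · rw [Finset.mul_sum]
          exact Finset.sum_congr rfl fun i _ => by ring
        · rw [sq, Finset.sum_mul]

end AuxProof

/-- Proposition 4.1: for the complete graph `K_n` (`n ≥ 2`,
`m = n(n−1)/2` edges), every column of `D†` satisfies `‖s_j‖₂² ≤ 2/n²`, hence
`ρ(D) ≤ √2/n`; moreover `κ_T(D) ≥ 1/(2√(n−1))` for every `T`. -/
theorem complete_graph_factors (n : ℕ) (hn : 2 ≤ n)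
    (m : ℕ) (hm : 2 * m = n * (n - 1))
    (D : Matrix (Fin m) (Fin n) ℝ)
    (hD : IsIncidence (⊤ : SimpleGraph (Fin n)) D)
    (S : Matrix (Fin n) (Fin m) ℝ) (hS : IsMoorePenrose D S) :
    (∀ j : Fin m, colNorm S j ^ 2 ≤ 2 / (n : ℝ) ^ 2) ∧
    (∀ j : Fin m, colNorm S j ≤ Real.sqrt 2 / n) ∧
    (∀ T : Finset (Fin m), 1 / (2 * Real.sqrt ((n : ℝ) - 1)) ≤ compat D T) := by
  classical
  have hn1 : 1 ≤ n := le_trans (by norm_num) hn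
  have h2n : (2 : ℝ) ≤ (n : ℝ) := by exact_mod_cast hn
  have hn0 : (0 : ℝ) < (n : ℝ) := by linarith
  obtain rfl : S = (n : ℝ)⁻¹ • Dᵀ := mp_unique D S _ hS (mp_inv D hD hn1)
  have hcol : ∀ j : Fin m, ∑ i, (((n : ℝ)⁻¹ • Dᵀ) i j) ^ 2 = 2 / (n : ℝ) ^ 2 := by
    intro j
    have : ∑ i, (((n : ℝ)⁻¹ • Dᵀ) i j) ^ 2 = (n : ℝ)⁻¹ ^ 2 * ∑ i, D j i ^ 2 := by
      rw [Finset.mul_sum]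
      exact Finset.sum_congr rfl fun i _ => by
        simp [Matrix.smul_apply, Matrix.transpose_apply, mul_pow]
    rw [this, row_sq_sum D hD j]
    rw [inv_pow]
    ring
  have hpart1 : ∀ j : Fin m, colNorm ((n : ℝ)⁻¹ • Dᵀ) j ^ 2 = 2 / (n : ℝ) ^ 2 := by
    intro j
    rw [colNorm, Real.sq_sqrt (Finset.sum_nonneg fun i _ => sq_nonneg _), hcol j]
  refine ⟨fun j => le_of_eq (hpart1 j), ?_, ?_⟩
  · intro j
    rw [colNorm, hcol j]
    rw [show (2 : ℝ) / (n : ℝ) ^ 2 = (Real.sqrt 2 / n) ^ 2 by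
      rw [div_pow, Real.sq_sqrt (by norm_num : (0:ℝ) ≤ 2)]]
    exact le_of_eq (Real.sqrt_sq (by positivity))
  · intro T
    have hs1 : (1 : ℝ) ≤ Real.sqrt ((n : ℝ) - 1) := Real.one_le_sqrt.mpr (by linarith)
    have hden : (0 : ℝ) < 2 * Real.sqrt ((n : ℝ) - 1) := by linarith
    by_cases hT : T = ∅
    · rw [compat, if_pos hT]
      rw [div_le_one hden]
      linarith
    · rw [compat, if_neg hT]
      obtain ⟨e₀, he₀⟩ := Finset.nonempty_iff_ne_empty.mpr hT
      obtain ⟨a, b, hab, ha, hb, h0⟩ := inc_row D hD e₀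
      set θ₀ : Fin n → ℝ := fun k => if k = a then 1 else 0 with hθ₀
      have hmv : D.mulVec θ₀ e₀ = 1 := by
        simp only [Matrix.mulVec, dotProduct, hθ₀, mul_ite, mul_one, mul_zero]
        rw [Finset.sum_ite_eq' Finset.univ a (fun k => D e₀ k)]
        simp [ha]
      have hsum0 : (∑ e ∈ T, |D.mulVec θ₀ e|) ≠ 0 := by
        have h1 : (1 : ℝ) ≤ ∑ e ∈ T, |D.mulVec θ₀ e| := by
          have h2 := Finset.single_le_sum (f := fun e => |D.mulVec θ₀ e|)
            (fun e _ => abs_nonneg _) he₀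
          simp only [hmv] at h2
          simpa using h2
        linarith
      refine le_csInf ⟨_, θ₀, hsum0, rfl⟩ ?_
      rintro r ⟨θ, hs, rfl⟩
      set s := ∑ e ∈ T, |D.mulVec θ e| with hsdef
      have hs0 : 0 ≤ s := Finset.sum_nonneg fun e _ => abs_nonneg _
      have hspos : 0 < s := hs0.lt_of_ne (Ne.symm hs)
      have hθsq : 0 ≤ ∑ i, θ i ^ 2 := Finset.sum_nonneg fun i _ => sq_nonneg _
      have hnorm2 : norm2 θ ^ 2 = ∑ i, θ i ^ 2 := Real.sq_sqrt hθsq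
      have hTc : (0 : ℝ) ≤ (T.card : ℝ) := Nat.cast_nonneg _
      have hcs : s ^ 2 ≤ (T.card : ℝ) * ∑ e ∈ T, (D.mulVec θ e) ^ 2 := by
        have := Finset.sum_mul_sq_le_sq_mul_sq T (fun _ => (1 : ℝ))
          (fun e => |D.mulVec θ e|)
        simpa [sq_abs] using this
      have hsub : ∑ e ∈ T, (D.mulVec θ e) ^ 2 ≤ ∑ e, (D.mulVec θ e) ^ 2 :=
        Finset.sum_le_sum_of_subset_of_nonneg (Finset.subset_univ T)
          (fun _ _ _ => sq_nonneg _)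
      have hquad : ∑ e, (D.mulVec θ e) ^ 2 ≤ (n : ℝ) * ∑ i, θ i ^ 2 := by
        rw [quad D hD hn1 θ]
        have := sq_nonneg (∑ i, θ i)
        linarith
      set B := 2 * Real.sqrt ((n : ℝ) - 1) * (Real.sqrt T.card * norm2 θ) with hB
      have hB0 : 0 ≤ B := by
        have h1 : 0 ≤ Real.sqrt ((n : ℝ) - 1) := Real.sqrt_nonneg _
        have h2 : 0 ≤ Real.sqrt (T.card : ℝ) := Real.sqrt_nonneg _
        have h3 : 0 ≤ norm2 θ := Real.sqrt_nonneg _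
        positivity
      have hfinal : s ^ 2 ≤ B ^ 2 := by
        have hsq' : Real.sqrt ((n : ℝ) - 1) ^ 2 = (n : ℝ) - 1 :=
          Real.sq_sqrt (by linarith)
        have hsq'' : Real.sqrt (T.card : ℝ) ^ 2 = (T.card : ℝ) := Real.sq_sqrt hTc
        have hn4 : (n : ℝ) ≤ 4 * ((n : ℝ) - 1) := by linarith
        calc s ^ 2 ≤ (T.card : ℝ) * ∑ e ∈ T, (D.mulVec θ e) ^ 2 := hcs
          _ ≤ (T.card : ℝ) * ((n : ℝ) * ∑ i, θ i ^ 2) :=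
              mul_le_mul_of_nonneg_left (le_trans hsub hquad) hTc
          _ ≤ (T.card : ℝ) * ((4 * ((n : ℝ) - 1)) * ∑ i, θ i ^ 2) :=
              mul_le_mul_of_nonneg_left
                (mul_le_mul_of_nonneg_right hn4 hθsq) hTc
          _ = B ^ 2 := by
              rw [hB, mul_pow, mul_pow, mul_pow, hsq', hsq'', hnorm2]
              ring
      have hsB : s ≤ B :=
        calc s = Real.sqrt (s ^ 2) := (Real.sqrt_sq hs0).symm
          _ ≤ Real.sqrt (B ^ 2) := Real.sqrt_le_sqrt hfinal
          _ = B := Real.sqrt_sq hB0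
      rw [div_le_div_iff₀ hden hspos]
      rw [hB] at hsB
      nlinarith [hsB]
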